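/- For every real λ > 0 and integers n, m, l with 1 ≤ l < m ≤ n, one has (C(n−m+l, l)/C(n, l)) · s_{n−l}(λ) · s_{n−m+l}(λ) < s_n(λ) · s_{n−m}(λ), where C(a, b) denotes the binomial coefficient. -/

import Mathlib

/-- The `n`-th partial sum of the Taylor series of the exponential function. -/
noncomputable def s (n : ℕ) (a : ℝ) : ℝ :=
  ∑ j ∈ Finset.range (n + 1), a ^ j / (Nat.factorial j : ℝ)

lemma s_pos {a : ℝ} (ha : 0 ≤ a) (n : ℕ) : 0 < s n a := by
  unfold s
  apply Finset.sum_pos'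
  · intro i _
    positivity
  · refine ⟨0, Finset.mem_range.2 (Nat.succ_pos n), by norm_num⟩

lemma s_zero (a : ℝ) : s 0 a = 1 := by simp [s]

lemma s_at_zero (n : ℕ) : s n 0 = 1 := by
  unfold s
  rw [Finset.sum_eq_single 0]
  · norm_num
  · intro j _ hj
    rw [zero_pow hj]
    simp
  · intro h
    exact absurd (Finset.mem_range.2 (Nat.succ_pos n)) h

lemma hasDerivAt_s (n : ℕ) (x : ℝ) : HasDerivAt (fun a => s (n + 1) a) (s n x) x := by
  have h : HasDerivAt (fun a : ℝ => ∑ j ∈ Finset.range (n + 2), a ^ j / (Nat.factorial j : ℝ))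
      (∑ j ∈ Finset.range (n + 2), (j : ℝ) * x ^ (j - 1) * ((Nat.factorial j : ℝ))⁻¹) x := by
    apply HasDerivAt.fun_sum
    intro j _
    simpa [div_eq_mul_inv] using (hasDerivAt_pow j x).mul_const ((Nat.factorial j : ℝ))⁻¹
  have hsum : (∑ j ∈ Finset.range (n + 2), (j : ℝ) * x ^ (j - 1) * ((Nat.factorial j : ℝ))⁻¹)
      = s n x := by
    rw [Finset.sum_range_succ']
    simp only [Nat.cast_zero, zero_mul, add_zero]
    unfold s
    apply Finset.sum_congr rfl
    intro i _
    have hfac : (Nat.factorial (i + 1) : ℝ) = (i + 1 : ℝ) * (Nat.factorial i : ℝ) := by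
      rw [Nat.factorial_succ]; push_cast; ring
    have hipos : (0 : ℝ) < (i : ℝ) + 1 := by positivity
    have hfpos : (0 : ℝ) < (Nat.factorial i : ℝ) := by
      exact_mod_cast Nat.factorial_pos i
    rw [hfac]
    push_cast
    field_simp
  rw [← hsum]
  exact h

lemma hasDerivAt_s0 (x : ℝ) : HasDerivAt (fun a => s 0 a) 0 x := by
  have : (fun a : ℝ => s 0 a) = fun _ => (1 : ℝ) := by
    funext a; exact s_zero a
  rw [this]
  exact hasDerivAt_const x 1

/-- Auxiliary quantity. -/
noncomputable def F (n j : ℕ) (a : ℝ) : ℝ :=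
  ((n : ℝ) + 1) * s (n + 1) a * s j a - ((j : ℝ) + 1) * s n a * s (j + 1) a

lemma F_self (n : ℕ) (a : ℝ) : F n n a = 0 := by
  unfold F; ring

lemma F_at_zero (n j : ℕ) : F n j 0 = (n : ℝ) - j := by
  unfold F
  rw [s_at_zero, s_at_zero, s_at_zero, s_at_zero]
  ring

lemma F_mono_aux (n j : ℕ) (g : ℝ → ℝ) (hd : ∀ x : ℝ, HasDerivAt (F n j) (g x) x)
    (hg : ∀ x : ℝ, 0 ≤ x → 0 ≤ g x) {a : ℝ} (ha : 0 ≤ a) : F n j 0 ≤ F n j a := by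
  have hdiff : Differentiable ℝ (F n j) := fun x => (hd x).differentiableAt
  have mono : MonotoneOn (F n j) (Set.Ici (0 : ℝ)) := by
    apply monotoneOn_of_deriv_nonneg (convex_Ici 0) hdiff.continuous.continuousOn
    · intro x _
      exact (hdiff x).differentiableWithinAt
    · intro x hx
      rw [interior_Ici] at hx
      rw [(hd x).deriv]
      exact hg x (le_of_lt hx)
  exact mono (Set.self_mem_Ici) ha ha

lemma key : ∀ N n j : ℕ, n + j ≤ N → j ≤ n → ∀ a : ℝ, 0 ≤ a → (n : ℝ) - j ≤ F n j a := by
  intro N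
  induction N with
  | zero =>
    intro n j hN hj a ha
    have hn : n = 0 := by omega
    have hj0 : j = 0 := by omega
    subst hn; subst hj0
    rw [F_self]
    norm_num
  | succ N ih =>
    intro n j hN hj a ha
    by_cases hjn : j = n
    · subst hjn
      rw [F_self]
      norm_num
    · have hlt : j < n := lt_of_le_of_ne hj hjn
      obtain ⟨m, rfl⟩ : ∃ m, n = m + 1 := ⟨n - 1, by omega⟩
      cases j with
      | zero =>
        -- F' (m+1) 0 = F m 0
        have hd : ∀ x : ℝ, HasDerivAt (F (m + 1) 0) (F m 0 x) x := by
          intro x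
          have h1 : HasDerivAt (fun a => ((m + 1 : ℕ) : ℝ) + 1) 0 x := hasDerivAt_const x _
          have hA : HasDerivAt (fun a => (((m + 1 : ℕ) : ℝ) + 1) * s (m + 1 + 1) a)
              ((((m + 1 : ℕ) : ℝ) + 1) * s (m + 1) x) x :=
            (hasDerivAt_s (m + 1) x).const_mul _
          have hB : HasDerivAt (fun a => (((m + 1 : ℕ) : ℝ) + 1) * s (m + 1 + 1) a * s 0 a)
              ((((m + 1 : ℕ) : ℝ) + 1) * s (m + 1) x * s 0 x
                + (((m + 1 : ℕ) : ℝ) + 1) * s (m + 1 + 1) x * 0) x := hA.mul (hasDerivAt_s0 x)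
          have hC : HasDerivAt (fun a => (((0 : ℕ) : ℝ) + 1) * s (m + 1) a)
              ((((0 : ℕ) : ℝ) + 1) * s m x) x := (hasDerivAt_s m x).const_mul _
          have hD : HasDerivAt (fun a => (((0 : ℕ) : ℝ) + 1) * s (m + 1) a * s (0 + 1) a)
              ((((0 : ℕ) : ℝ) + 1) * s m x * s (0 + 1) x
                + (((0 : ℕ) : ℝ) + 1) * s (m + 1) x * s 0 x) x := hC.mul (hasDerivAt_s 0 x)
          have := hB.sub hD
          refine this.congr_deriv ?_
          unfold F
          rw [s_zero]
          push_cast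
          ring
        have hg : ∀ x : ℝ, 0 ≤ x → 0 ≤ F m 0 x := by
          intro x hx
          have h1 := ih m 0 (by omega) (by omega) x hx
          push_cast at h1
          have h2 : (0 : ℝ) ≤ (m : ℝ) := Nat.cast_nonneg m
          linarith
        have := F_mono_aux (m + 1) 0 _ hd hg ha
        rw [F_at_zero] at this
        simpa using this
      | succ i =>
        -- F' (m+1) (i+1) = F (m+1) i + F m (i+1)
        have hd : ∀ x : ℝ, HasDerivAt (F (m + 1) (i + 1)) (F (m + 1) i x + F m (i + 1) x) x := by
          intro x
          have hA : HasDerivAt (fun a => (((m + 1 : ℕ) : ℝ) + 1) * s (m + 1 + 1) a)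
              ((((m + 1 : ℕ) : ℝ) + 1) * s (m + 1) x) x :=
            (hasDerivAt_s (m + 1) x).const_mul _
          have hB : HasDerivAt (fun a => (((m + 1 : ℕ) : ℝ) + 1) * s (m + 1 + 1) a * s (i + 1) a)
              ((((m + 1 : ℕ) : ℝ) + 1) * s (m + 1) x * s (i + 1) x
                + (((m + 1 : ℕ) : ℝ) + 1) * s (m + 1 + 1) x * s i x) x :=
            hA.mul (hasDerivAt_s i x)
          have hC : HasDerivAt (fun a => (((i + 1 : ℕ) : ℝ) + 1) * s (m + 1) a)
              ((((i + 1 : ℕ) : ℝ) + 1) * s m x) x := (hasDerivAt_s m x).const_mul _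
          have hD : HasDerivAt (fun a => (((i + 1 : ℕ) : ℝ) + 1) * s (m + 1) a * s (i + 1 + 1) a)
              ((((i + 1 : ℕ) : ℝ) + 1) * s m x * s (i + 1 + 1) x
                + (((i + 1 : ℕ) : ℝ) + 1) * s (m + 1) x * s (i + 1) x) x :=
            hC.mul (hasDerivAt_s (i + 1) x)
          have := hB.sub hD
          refine this.congr_deriv ?_
          unfold F
          push_cast
          ring
        have hg : ∀ x : ℝ, 0 ≤ x → 0 ≤ F (m + 1) i x + F m (i + 1) x := by
          intro x hx
          have h1 := ih (m + 1) i (by omega) (by omega) x hx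
          have h2 := ih m (i + 1) (by omega) (by omega) x hx
          have c1 : (0 : ℝ) ≤ (m : ℝ) + 1 - i := by
            have : (i : ℝ) ≤ (m : ℝ) := by exact_mod_cast Nat.le_of_lt_succ (by omega)
            linarith
          have c2 : (0 : ℝ) ≤ (m : ℝ) - (i + 1) := by
            have : ((i : ℝ) + 1) ≤ (m : ℝ) := by exact_mod_cast (by omega : i + 1 ≤ m)
            linarith
          push_cast at h1 h2
          linarith
        have := F_mono_aux (m + 1) (i + 1) _ hd hg ha
        rw [F_at_zero] at this
        exact this

lemma step (M j : ℕ) (h : j + 1 ≤ M) {a : ℝ} (ha : 0 < a) :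
    ((j : ℝ) + 1) * (s M a * s (j + 1) a) < ((M : ℝ) + 1) * (s (M + 1) a * s j a) := by
  have hk := key (M + j) M j le_rfl (by omega) a ha.le
  unfold F at hk
  have hc : (1 : ℝ) ≤ (M : ℝ) - j := by
    have : ((j : ℝ) + 1) ≤ (M : ℝ) := by exact_mod_cast h
    linarith
  nlinarith [hk, hc]

lemma chain : ∀ l e b : ℕ, 1 ≤ l → ∀ a : ℝ, 0 < a →
    ((Nat.choose (b + l) l : ℝ)) * (s (b + l + e) a * s (b + l) a)
      < ((Nat.choose (b + 2 * l + e) l : ℝ)) * (s (b + 2 * l + e) a * s b a) := by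
  intro l
  induction l with
  | zero => intro e b h; omega
  | succ l ihl =>
    intro e b _ a ha
    rcases Nat.eq_zero_or_pos l with hl0 | hlpos
    · -- base case l+1 = 1
      subst hl0
      have hstep := step (b + e + 1) b (by omega) ha
      have e1 : b + e + 1 + 1 = b + 2 * 1 + e := by ring
      have e2 : b + e + 1 = b + 1 + e := by ring
      rw [e1, e2] at hstep
      have c1 : (Nat.choose (b + 1) 1 : ℝ) = (b : ℝ) + 1 := by
        rw [Nat.choose_one_right]; push_cast; ring
      have c2 : (Nat.choose (b + 2 * 1 + e) 1 : ℝ) = (b : ℝ) + e + 1 + 1 := by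
        rw [Nat.choose_one_right]; push_cast; ring
      rw [c1, c2]
      calc ((b : ℝ) + 1) * (s (b + 1 + e) a * s (b + 1) a)
          < ((b + e + 1 : ℕ) : ℝ) * (s (b + 2 * 1 + e) a * s b a) + (s (b + 2 * 1 + e) a * s b a) := by
            push_cast at hstep ⊢; linarith
        _ = ((b : ℝ) + e + 1 + 1) * (s (b + 2 * 1 + e) a * s b a) := by push_cast; ring
    · -- inductive step
      have ih := ihl e (b + 1) hlpos a ha
      -- rewrite indices in ih
      have e1 : b + 1 + l = b + (l + 1) := by ring
      have e2 : b + 1 + l + e = b + (l + 1) + e := by ring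
      have e3 : b + 1 + 2 * l + e = b + 2 * l + 1 + e := by ring
      rw [e1, e3] at ih
      have hstep := step (b + 2 * l + 1 + e) b (by omega) ha
      have e4 : b + 2 * l + 1 + e + 1 = b + 2 * (l + 1) + e := by ring
      rw [e4] at hstep
      set X := s (b + (l + 1) + e) a * s (b + (l + 1)) a with hX
      set Z := s (b + 2 * l + 1 + e) a * s (b + 1) a with hZ
      set Y := s (b + 2 * (l + 1) + e) a * s b a with hY
      set A1 := Nat.choose (b + (l + 1)) l with hA1
      set A2 := Nat.choose (b + 2 * l + 1 + e) l with hA2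
      set G1 := Nat.choose (b + (l + 1)) (l + 1) with hG1
      set G2 := Nat.choose (b + 2 * (l + 1)) (l + 1)
      -- nat identities
      have id1 : G1 * (l + 1) = A1 * (b + 1) := by
        rw [hG1, hA1]
        have := Nat.choose_succ_right_eq (b + (l + 1)) l
        rw [this]
        congr 1
        omega
      have id2 : (b + 2 * l + 1 + e + 1) * A2 = Nat.choose (b + 2 * (l + 1) + e) (l + 1) * (l + 1) := by
        rw [hA2]
        have e5 : b + 2 * (l + 1) + e = b + 2 * l + 1 + e + 1 := by ring
        rw [e5]
        exact Nat.add_one_mul_choose_eq (b + 2 * l + 1 + e) l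
      have hA2pos : 0 < A2 := Nat.choose_pos (by omega)
      have hb1 : (0 : ℝ) < (b : ℝ) + 1 := by positivity
      have hA2posR : (0 : ℝ) < (A2 : ℝ) := by exact_mod_cast hA2pos
      have hl1 : (0 : ℝ) < (l : ℝ) + 1 := by positivity
      have main : ((G1 : ℝ) * X) * ((l : ℝ) + 1)
          < ((Nat.choose (b + 2 * (l + 1) + e) (l + 1) : ℝ) * Y) * ((l : ℝ) + 1) := by
        have c1 : (G1 : ℝ) * ((l : ℝ) + 1) = (A1 : ℝ) * ((b : ℝ) + 1) := by
          exact_mod_cast id1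
        have c2 : ((b : ℝ) + 2 * l + 1 + e + 1) * (A2 : ℝ)
            = (Nat.choose (b + 2 * (l + 1) + e) (l + 1) : ℝ) * ((l : ℝ) + 1) := by
          exact_mod_cast id2
        calc ((G1 : ℝ) * X) * ((l : ℝ) + 1)
            = ((b : ℝ) + 1) * ((A1 : ℝ) * X) := by
              rw [mul_right_comm, c1]; ring
          _ < ((b : ℝ) + 1) * ((A2 : ℝ) * Z) := by
              exact mul_lt_mul_of_pos_left ih hb1
          _ = (A2 : ℝ) * (((b : ℝ) + 1) * Z) := by ring
          _ < (A2 : ℝ) * ((((b + 2 * l + 1 + e : ℕ) : ℝ) + 1) * Y) := by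
              exact mul_lt_mul_of_pos_left hstep hA2posR
          _ = ((Nat.choose (b + 2 * (l + 1) + e) (l + 1) : ℝ) * Y) * ((l : ℝ) + 1) := by
              push_cast at c2 ⊢
              linear_combination Y * c2
      exact (mul_lt_mul_iff_left₀ hl1).1 main

theorem stmt_1 (a : ℝ) (ha : 0 < a) (n m l : ℕ)
    (hl : 1 ≤ l) (hlm : l < m) (hmn : m ≤ n) :
    ((Nat.choose (n - m + l) l : ℝ) / (Nat.choose n l : ℝ)) * s (n - l) a * s (n - m + l) a
      < s n a * s (n - m) a := by
  have hln : l ≤ n := le_trans (le_of_lt hlm) hmn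
  have hCn : 0 < (Nat.choose n l : ℝ) := by exact_mod_cast Nat.choose_pos hln
  rw [div_mul_eq_mul_div, div_mul_eq_mul_div, div_lt_iff₀ hCn]
  -- goal: ↑C(n-m+l,l) * s (n-l) a * s (n-m+l) a < s n a * s (n-m) a * ↑C(n,l)
  by_cases h2l : 2 * l ≤ m
  · obtain ⟨e, he⟩ : ∃ e, m = 2 * l + e := ⟨m - 2 * l, by omega⟩
    obtain ⟨b, hb⟩ : ∃ b, n = b + 2 * l + e := ⟨n - m, by omega⟩
    have i1 : n - m + l = b + l := by omega
    have i2 : n - l = b + l + e := by omega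
    have i3 : n - m = b := by omega
    rw [i1, i2, i3, hb]
    have := chain l e b hl a ha
    calc ((Nat.choose (b + l) l : ℝ)) * s (b + l + e) a * s (b + l) a
        = ((Nat.choose (b + l) l : ℝ)) * (s (b + l + e) a * s (b + l) a) := by ring
      _ < ((Nat.choose (b + 2 * l + e) l : ℝ)) * (s (b + 2 * l + e) a * s b a) := this
      _ = s (b + 2 * l + e) a * s b a * (Nat.choose (b + 2 * l + e) l : ℝ) := by ring
  · -- symmetric case: use l' = m - l
    set l' := m - l with hl'
    have hl'1 : 1 ≤ l' := by omega
    obtain ⟨e, he⟩ : ∃ e, m = 2 * l' + e := ⟨m - 2 * l', by omega⟩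
    obtain ⟨b, hb⟩ : ∃ b, n = b + 2 * l' + e := ⟨n - m, by omega⟩
    have hchain := chain l' e b hl'1 a ha
    have i1 : b + l' = n - l := by omega
    have i2 : b + l' + e = n - m + l := by omega
    have i3 : b + 2 * l' + e = n := by omega
    have i4 : b = n - m := by omega
    rw [i2, i1, i3, i4] at hchain
    -- hchain : C(n-l, l') * (s (n-m+l) a * s (n-l) a) < C(n, l') * (s n a * s (n-m) a)
    have hid : Nat.choose (n - m + l) l * Nat.choose n l' = Nat.choose n l * Nat.choose (n - l) l' := by
      have h1 : Nat.choose n m * Nat.choose m l = Nat.choose n l * Nat.choose (n - l) (m - l) :=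
        Nat.choose_mul (le_of_lt hlm)
      have h2 : Nat.choose n m * Nat.choose m l' = Nat.choose n l' * Nat.choose (n - l') (m - l') :=
        Nat.choose_mul (by omega)
      have h3 : Nat.choose m l' = Nat.choose m l := by
        rw [hl']
        exact Nat.choose_symm (le_of_lt hlm)
      have h4 : n - l' = n - m + l := by omega
      have h5 : m - l' = l := by omega
      rw [h3, h4, h5] at h2
      rw [← hl'] at h1
      calc Nat.choose (n - m + l) l * Nat.choose n l'
          = Nat.choose n l' * Nat.choose (n - m + l) l := Nat.mul_comm _ _
        _ = Nat.choose n m * Nat.choose m l := h2.symm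
        _ = Nat.choose n l * Nat.choose (n - l) l' := h1
    have hK : (0 : ℝ) < (Nat.choose n l' : ℝ) := by
      exact_mod_cast Nat.choose_pos (by omega : l' ≤ n)
    have main : ((Nat.choose n l' : ℝ)) * (((Nat.choose (n - m + l) l : ℝ)) * (s (n - l) a * s (n - m + l) a))
        < ((Nat.choose n l' : ℝ)) * (((Nat.choose n l : ℝ)) * (s n a * s (n - m) a)) := by
      have hCnl : (0 : ℝ) < (Nat.choose n l : ℝ) := hCn
      have step1 : ((Nat.choose n l : ℝ)) * (((Nat.choose (n - l) l' : ℝ)) * (s (n - m + l) a * s (n - l) a))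
          < ((Nat.choose n l : ℝ)) * (((Nat.choose n l' : ℝ)) * (s n a * s (n - m) a)) :=
        mul_lt_mul_of_pos_left hchain hCnl
      have hidR : ((Nat.choose (n - m + l) l : ℝ)) * ((Nat.choose n l' : ℝ))
          = ((Nat.choose n l : ℝ)) * ((Nat.choose (n - l) l' : ℝ)) := by
        exact_mod_cast hid
      calc ((Nat.choose n l' : ℝ)) * (((Nat.choose (n - m + l) l : ℝ)) * (s (n - l) a * s (n - m + l) a))
          = ((Nat.choose n l : ℝ)) * (((Nat.choose (n - l) l' : ℝ)) * (s (n - m + l) a * s (n - l) a)) := by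
            linear_combination (s (n - l) a * s (n - m + l) a) * hidR
        _ < ((Nat.choose n l : ℝ)) * (((Nat.choose n l' : ℝ)) * (s n a * s (n - m) a)) := step1
        _ = ((Nat.choose n l' : ℝ)) * (((Nat.choose n l : ℝ)) * (s n a * s (n - m) a)) := by ring
    have := (mul_lt_mul_iff_right₀ hK).1 main
    calc ((Nat.choose (n - m + l) l : ℝ)) * s (n - l) a * s (n - m + l) a
        = ((Nat.choose (n - m + l) l : ℝ)) * (s (n - l) a * s (n - m + l) a) := by ring
      _ < ((Nat.choose n l : ℝ)) * (s n a * s (n - m) a) := this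
      _ = s n a * s (n - m) a * (Nat.choose n l : ℝ) := by ring
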